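/- Let z : [0, ρ̄] → ℝ be continuous, C¹ on (0, ρ̄), with z(φ) < 0 for φ ∈ (0, ρ̄), z(ρ̄) = 0, satisfying ż(φ) = h(φ) − c − D(φ)g(φ)/z(φ) on (0, ρ̄). Assume D(φ)g(φ)/(φ − ρ̄) → ℓ as φ → ρ̄⁻ with −∞ < ℓ < 0. Then z is differentiable from the left at ρ̄ and ż(ρ̄) = (h(ρ̄) − c + √((h(ρ̄)−c)² − 4ℓ))/2. -/

import Mathlib

open Set Filter Topology

set_option maxHeartbeats 1600000

lemma quad_lower (A Q x κ : ℝ) (hQ : Q < 0) (hx : 0 < x) (hκ : 0 ≤ κ)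
    (hxR : (A + Real.sqrt (A^2 - 4*Q))/2 + κ ≤ x) :
    κ * x ≤ x^2 - A*x + Q := by
  have h4 : (0:ℝ) ≤ A^2 - 4*Q := by nlinarith
  have hS : Real.sqrt (A^2-4*Q) ^ 2 = A^2 - 4*Q := Real.sq_sqrt h4
  have hS0 : 0 ≤ Real.sqrt (A^2-4*Q) := Real.sqrt_nonneg _
  have hAS : A ≤ Real.sqrt (A^2-4*Q) := by nlinarith
  nlinarith [mul_nonneg hκ hS0, mul_nonneg hκ hx.le, mul_nonneg (mul_nonneg hκ hx.le) hS0]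

lemma quad_upper (A Q x κ : ℝ) (hQ : Q < 0) (hx : 0 < x) (hκ : 0 ≤ κ)
    (hxR : x ≤ (A + Real.sqrt (A^2 - 4*Q))/2 - κ) :
    x^2 - A*x + Q ≤ -(κ * x) := by
  have h4 : (0:ℝ) ≤ A^2 - 4*Q := by nlinarith
  have hS : Real.sqrt (A^2-4*Q) ^ 2 = A^2 - 4*Q := Real.sq_sqrt h4
  have hS0 : 0 ≤ Real.sqrt (A^2-4*Q) := Real.sqrt_nonneg _
  have hAS : A ≤ Real.sqrt (A^2-4*Q) := by nlinarith
  nlinarith [mul_nonneg hκ hS0, mul_nonneg hκ hx.le, mul_nonneg (mul_nonneg hκ hx.le) hS0]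

theorem stmt1 (ρ : ℝ) (hρ : 0 < ρ) (h D g z : ℝ → ℝ) (c ℓ : ℝ)
    (hh : ContinuousOn h (Icc 0 ρ))
    (hD : ContinuousOn D (Icc 0 ρ)) (hg : ContinuousOn g (Icc 0 ρ))
    (hDpos : ∀ φ ∈ Ioo 0 ρ, 0 < D φ) (hgpos : ∀ φ ∈ Ioo 0 ρ, 0 < g φ)
    (hz : ContinuousOn z (Icc 0 ρ))
    (hzneg : ∀ φ ∈ Ioo 0 ρ, z φ < 0) (hzρ : z ρ = 0)
    (hode : ∀ φ ∈ Ioo 0 ρ, HasDerivAt z (h φ - c - D φ * g φ / z φ) φ)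
    (hℓ : ℓ < 0)
    (hlim : Tendsto (fun φ => D φ * g φ / (φ - ρ)) (𝓝[<] ρ) (𝓝 ℓ)) :
    Tendsto (fun φ => (z φ - z ρ) / (φ - ρ)) (𝓝[<] ρ)
      (𝓝 ((h ρ - c + Real.sqrt ((h ρ - c) ^ 2 - 4 * ℓ)) / 2)) := by
  simp only [hzρ, sub_zero]
  set L : ℝ := (h ρ - c + Real.sqrt ((h ρ - c) ^ 2 - 4 * ℓ)) / 2 with hLdef
  set w : ℝ → ℝ := fun φ => z φ / (φ - ρ) with hwdef
  set q : ℝ → ℝ := fun φ => D φ * g φ / (φ - ρ) with hqdef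
  set W : ℝ → ℝ := fun φ => ((w φ)^2 - (h φ - c) * w φ + q φ) / (w φ * (ρ - φ)) with hWdef
  -- basic positivity facts
  have hL0 : 0 < L := by
    have h4 : (0:ℝ) ≤ (h ρ - c)^2 - 4*ℓ := by nlinarith
    have hS : Real.sqrt ((h ρ - c)^2-4*ℓ) ^ 2 = (h ρ - c)^2 - 4*ℓ := Real.sq_sqrt h4
    have hS0 : 0 ≤ Real.sqrt ((h ρ - c)^2-4*ℓ) := Real.sqrt_nonneg _
    have hgt : -(h ρ - c) < Real.sqrt ((h ρ - c)^2-4*ℓ) := by nlinarith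
    rw [hLdef]; linarith
  have hwpos : ∀ φ ∈ Ioo 0 ρ, 0 < w φ := fun φ hφ =>
    div_pos_of_neg_of_neg (hzneg φ hφ) (sub_neg.mpr hφ.2)
  have hqneg : ∀ φ ∈ Ioo 0 ρ, q φ < 0 := fun φ hφ =>
    div_neg_of_pos_of_neg (mul_pos (hDpos φ hφ) (hgpos φ hφ)) (sub_neg.mpr hφ.2)
  -- derivative of w
  have hDW : ∀ φ ∈ Ioo 0 ρ, HasDerivAt w (W φ) φ := by
    intro φ hφ
    have hne : φ - ρ ≠ 0 := sub_ne_zero.mpr (ne_of_lt hφ.2)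
    have hzne : z φ ≠ 0 := ne_of_lt (hzneg φ hφ)
    have h1 : HasDerivAt (fun t => t - ρ) 1 φ := (hasDerivAt_id φ).sub_const ρ
    have h2 : HasDerivAt w _ φ := (hode φ hφ).div h1 hne
    convert h2 using 1
    rw [hWdef, hwdef, hqdef]
    have hρφ : ρ - φ ≠ 0 := fun hc => hne (by linarith [sub_eq_zero.mp hc])
    field_simp
    ring
  have hwcont : ∀ φ ∈ Ioo 0 ρ, ContinuousAt w φ := fun φ hφ => (hDW φ hφ).continuousAt
  -- limits
  have hIooMem : Ioo 0 ρ ∈ 𝓝[<] ρ := Ioo_mem_nhdsLT_of_mem ⟨hρ, le_refl ρ⟩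
  have hIccLe : 𝓝[<] ρ ≤ 𝓝[Icc 0 ρ] ρ :=
    nhdsWithin_le_iff.mpr (mem_of_superset hIooMem Ioo_subset_Icc_self)
  have hha : Tendsto (fun φ => h φ - c) (𝓝[<] ρ) (𝓝 (h ρ - c)) :=
    (((hh ρ ⟨hρ.le, le_refl ρ⟩).mono_left hIccLe).sub tendsto_const_nhds)
  have hrlim : Tendsto (fun φ => (h φ - c + Real.sqrt ((h φ - c) ^ 2 - 4 * q φ)) / 2)
      (𝓝[<] ρ) (𝓝 L) := by
    rw [hLdef]
    exact (hha.add (((hha.pow 2).sub (hlim.const_mul 4)).sqrt)).div_const 2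
  have hzlim : Tendsto z (𝓝[<] ρ) (𝓝 0) := by
    have := (hz ρ ⟨hρ.le, le_refl ρ⟩).mono_left hIccLe
    rwa [hzρ] at this
  -- start of main argument
  rw [Metric.tendsto_nhds]
  intro ε hε
  have hε2 : 0 < ε/2 := by linarith
  have hrev : {φ | |(h φ - c + Real.sqrt ((h φ - c) ^ 2 - 4 * q φ)) / 2 - L| < ε/2}
      ∈ 𝓝[<] ρ := by
    have := hrlim (Metric.ball_mem_nhds L hε2)
    simpa [Metric.mem_ball, Real.dist_eq, Set.preimage] using this
  obtain ⟨α, hαρ, hαsub⟩ := mem_nhdsLT_iff_exists_Ioo_subset.mp hrev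
  set α' : ℝ := max α 0 with hα'def
  have hα'ρ : α' < ρ := max_lt hαρ hρ
  have hα'0 : 0 ≤ α' := le_max_right _ _
  have hsubIoo : Ioo α' ρ ⊆ Ioo 0 ρ := fun t ht => ⟨lt_of_le_of_lt hα'0 ht.1, ht.2⟩
  have hrball : ∀ t ∈ Ioo α' ρ,
      |(h t - c + Real.sqrt ((h t - c) ^ 2 - 4 * q t)) / 2 - L| < ε/2 := fun t ht =>
    hαsub ⟨lt_of_le_of_lt (le_max_left α 0) ht.1, ht.2⟩
  -- slope lemmas
  have right_lt : ∀ s φ₁, s ∈ Ioo 0 ρ → s < φ₁ → 0 < W s → ∃ t ∈ Ioc s φ₁, w s < w t := by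
    intro s φ₁ hs hsφ₁ hW
    have hd := hDW s hs
    rw [hasDerivAt_iff_tendsto_slope] at hd
    have h1 : ∀ᶠ t in 𝓝[≠] s, 0 < slope w s t := hd.eventually (eventually_gt_nhds hW)
    have h2 : ∀ᶠ t in 𝓝[>] s, 0 < slope w s t :=
      h1.filter_mono (nhdsWithin_mono s (fun t ht => ht.ne'))
    have h3 : Ioc s φ₁ ∈ 𝓝[>] s := Ioc_mem_nhdsGT_of_mem ⟨le_refl s, hsφ₁⟩
    have h3' : ∀ᶠ t in 𝓝[>] s, t ∈ Ioc s φ₁ := h3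
    obtain ⟨t, ht1, ht2⟩ := (h2.and h3').exists
    refine ⟨t, ht2, ?_⟩
    have hts : 0 < t - s := sub_pos.mpr ht2.1
    have hm := mul_pos ht1 hts
    rw [slope_def_field] at hm
    have hne : t - s ≠ 0 := ne_of_gt hts
    have : 0 < w t - w s := by
      calc (0:ℝ) < (w t - w s) / (t - s) * (t - s) := hm
        _ = w t - w s := div_mul_cancel₀ _ hne
    linarith
  have right_gt : ∀ s φ₁, s ∈ Ioo 0 ρ → s < φ₁ → W s < 0 → ∃ t ∈ Ioc s φ₁, w t < w s := by
    intro s φ₁ hs hsφ₁ hW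
    have hd := hDW s hs
    rw [hasDerivAt_iff_tendsto_slope] at hd
    have h1 : ∀ᶠ t in 𝓝[≠] s, slope w s t < 0 := hd.eventually (eventually_lt_nhds hW)
    have h2 : ∀ᶠ t in 𝓝[>] s, slope w s t < 0 :=
      h1.filter_mono (nhdsWithin_mono s (fun t ht => ht.ne'))
    have h3 : Ioc s φ₁ ∈ 𝓝[>] s := Ioc_mem_nhdsGT_of_mem ⟨le_refl s, hsφ₁⟩
    have h3' : ∀ᶠ t in 𝓝[>] s, t ∈ Ioc s φ₁ := h3
    obtain ⟨t, ht1, ht2⟩ := (h2.and h3').exists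
    refine ⟨t, ht2, ?_⟩
    have hts : 0 < t - s := sub_pos.mpr ht2.1
    have hm := mul_neg_of_neg_of_pos ht1 hts
    rw [slope_def_field] at hm
    have hne : t - s ≠ 0 := ne_of_gt hts
    have : w t - w s < 0 := by
      calc w t - w s = (w t - w s) / (t - s) * (t - s) := (div_mul_cancel₀ _ hne).symm
        _ < 0 := hm
    linarith
  -- Claim U : no point of Ioo α' ρ has w ≥ L + ε
  have mainU : ∀ φ₀ ∈ Ioo α' ρ, w φ₀ < L + ε := by
    intro φ₀ hφ₀
    by_contra hcon
    push_neg at hcon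
    have hpers : ∀ φ ∈ Ico φ₀ ρ, L + ε ≤ w φ := by
      by_contra hcon2
      push_neg at hcon2
      obtain ⟨φ₁, hφ₁, hwφ₁⟩ := hcon2
      have hφ₀φ₁ : φ₀ < φ₁ := by
        rcases lt_or_eq_of_le hφ₁.1 with hlt | heq
        · exact hlt
        · exfalso; rw [← heq] at hwφ₁; linarith
      set S : Set ℝ := {t ∈ Icc φ₀ φ₁ | L + ε ≤ w t} with hSdef
      have hIccsub : Icc φ₀ φ₁ ⊆ Ioo α' ρ := fun t ht =>
        ⟨lt_of_lt_of_le hφ₀.1 ht.1, lt_of_le_of_lt ht.2 hφ₁.2⟩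
      have hSclosed : IsClosed S := by
        have hwc : ContinuousOn w (Icc φ₀ φ₁) := fun t ht =>
          (hwcont t (hsubIoo (hIccsub ht))).continuousWithinAt
        exact hwc.preimage_isClosed_of_isClosed isClosed_Icc isClosed_Ici
      have hSne : S.Nonempty := ⟨φ₀, ⟨le_refl φ₀, hφ₀φ₁.le⟩, hcon⟩
      have hSbdd : BddAbove S := ⟨φ₁, fun t ht => ht.1.2⟩
      set s := sSup S with hsdef
      have hsS : s ∈ S := hSclosed.csSup_mem hSne hSbdd
      have hsρ : s ∈ Ioo 0 ρ := hsubIoo (hIccsub hsS.1)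
      have hsφ₁ : s < φ₁ := by
        rcases lt_or_eq_of_le hsS.1.2 with hlt | heq
        · exact hlt
        · exfalso; rw [heq] at hsS; linarith [hsS.2]
      have hWs : 0 < W s := by
        have hws := hwpos s hsρ
        have hqs := hqneg s hsρ
        have hrs := abs_lt.mp (hrball s (hIccsub hsS.1))
        have hP : (ε/2) * w s ≤ (w s)^2 - (h s - c) * w s + q s := by
          apply quad_lower _ _ _ _ hqs hws hε2.le
          linarith [hsS.2, hrs.2]
        rw [hWdef]
        apply div_pos _ (mul_pos hws (sub_pos.mpr hsρ.2))
        calc (0:ℝ) < (ε/2) * w s := mul_pos hε2 hws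
          _ ≤ _ := hP
      obtain ⟨t, ht1, ht2⟩ := right_lt s φ₁ hsρ hsφ₁ hWs
      have htS : t ∈ S := ⟨⟨hsS.1.1.trans ht1.1.le, ht1.2⟩, le_trans hsS.2 ht2.le⟩
      have : t ≤ s := le_csSup hSbdd htS
      linarith [ht1.1]
    -- monotone G and contradiction
    set c₀ : ℝ := L + ε/2 with hc₀def
    set G : ℝ → ℝ := fun φ => (w φ - c₀) * (ρ - φ) with hGdef
    have hGd : ∀ x ∈ Ioo φ₀ ρ, HasDerivAt G (W x * (ρ - x) + (w x - c₀) * (-1)) x := by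
      intro x hx
      have hxρ : x ∈ Ioo 0 ρ := ⟨lt_trans (lt_of_le_of_lt hα'0 hφ₀.1) hx.1, hx.2⟩
      exact ((hDW x hxρ).sub_const c₀).mul ((hasDerivAt_id x).const_sub ρ)
    have hGmono : MonotoneOn G (Ico φ₀ ρ) := by
      apply monotoneOn_of_deriv_nonneg (convex_Ico _ _)
      · intro t ht
        have htρ : t ∈ Ioo 0 ρ := ⟨lt_of_le_of_lt hα'0 (lt_of_lt_of_le hφ₀.1 ht.1), ht.2⟩
        exact (((hDW t htρ).sub_const c₀).mul
          ((hasDerivAt_id t).const_sub ρ)).continuousAt.continuousWithinAt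
      · intro x hx
        rw [interior_Ico] at hx
        exact (hGd x hx).differentiableAt.differentiableWithinAt
      · intro x hx
        rw [interior_Ico] at hx
        rw [(hGd x hx).deriv]
        have hxρ : x ∈ Ioo 0 ρ := ⟨lt_trans (lt_of_le_of_lt hα'0 hφ₀.1) hx.1, hx.2⟩
        have hxα' : x ∈ Ioo α' ρ := ⟨lt_trans hφ₀.1 hx.1, hx.2⟩
        have hwx := hwpos x hxρ
        have hqx := hqneg x hxρ
        have hwge : L + ε ≤ w x := hpers x ⟨hx.1.le, hx.2⟩
        have hκ : ε/2 ≤ w x - c₀ := by rw [hc₀def]; linarith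
        have hrx := abs_lt.mp (hrball x hxα')
        have hρx : 0 < ρ - x := sub_pos.mpr hx.2
        have hP : (w x - c₀) * w x ≤ (w x)^2 - (h x - c) * w x + q x := by
          apply quad_lower _ _ _ _ hqx hwx (le_trans hε2.le hκ)
          rw [hc₀def] at hκ ⊢
          linarith [hrx.2]
        have hWxge : w x - c₀ ≤ W x * (ρ - x) := by
          rw [hWdef]
          simp only
          rw [div_mul_eq_mul_div, le_div_iff₀ (mul_pos hwx hρx)]
          nlinarith [mul_le_mul_of_nonneg_right hP hρx.le]
        linarith
    have hK : (ε/2) * (ρ - φ₀) ≤ G φ₀ := by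
      rw [hGdef]
      simp only
      apply mul_le_mul_of_nonneg_right _ (by linarith [hφ₀.2] : (0:ℝ) ≤ ρ - φ₀)
      rw [hc₀def]
      linarith [hcon]
    have hzle : ∀ φ ∈ Ioo φ₀ ρ, z φ ≤ -((ε/2) * (ρ - φ₀)) := by
      intro φ hφ
      have hφρ : φ ∈ Ioo 0 ρ := ⟨lt_trans (lt_of_le_of_lt hα'0 hφ₀.1) hφ.1, hφ.2⟩
      have hG := hGmono ⟨le_refl φ₀, hφ₀.2⟩ ⟨hφ.1.le, hφ.2⟩ hφ.1.le
      have hne : φ - ρ ≠ 0 := sub_ne_zero.mpr (ne_of_lt hφ.2)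
      have hzw : w φ * (φ - ρ) = z φ := div_mul_cancel₀ _ hne
      have hρφ : (0:ℝ) ≤ ρ - φ := by linarith [hφ.2]
      have hc₀pos : (0:ℝ) < c₀ := by rw [hc₀def]; linarith
      have hGφ : (ε/2) * (ρ - φ₀) ≤ (w φ - c₀) * (ρ - φ) := le_trans hK hG
      nlinarith [mul_nonneg hc₀pos.le hρφ]
    have hev : ∀ᶠ φ in 𝓝[<] ρ, z φ ≤ -((ε/2) * (ρ - φ₀)) := by
      filter_upwards [Ioo_mem_nhdsLT_of_mem (⟨hφ₀.2, le_refl ρ⟩ : ρ ∈ Ioc φ₀ ρ)] with φ hφ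
      exact hzle φ hφ
    have hfin : (0:ℝ) ≤ -((ε/2) * (ρ - φ₀)) := le_of_tendsto hzlim hev
    nlinarith [mul_pos hε2 (sub_pos.mpr hφ₀.2)]
  -- Claim V : no point of Ioo α' ρ has w ≤ L - ε
  have mainV : ∀ φ₀ ∈ Ioo α' ρ, L - ε < w φ₀ := by
    intro φ₀ hφ₀
    by_contra hcon
    push_neg at hcon
    have hpers : ∀ φ ∈ Ico φ₀ ρ, w φ ≤ L - ε := by
      by_contra hcon2
      push_neg at hcon2
      obtain ⟨φ₁, hφ₁, hwφ₁⟩ := hcon2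
      have hφ₀φ₁ : φ₀ < φ₁ := by
        rcases lt_or_eq_of_le hφ₁.1 with hlt | heq
        · exact hlt
        · exfalso; rw [← heq] at hwφ₁; linarith
      set S : Set ℝ := {t ∈ Icc φ₀ φ₁ | w t ≤ L - ε} with hSdef
      have hIccsub : Icc φ₀ φ₁ ⊆ Ioo α' ρ := fun t ht =>
        ⟨lt_of_lt_of_le hφ₀.1 ht.1, lt_of_le_of_lt ht.2 hφ₁.2⟩
      have hSclosed : IsClosed S := by
        have hwc : ContinuousOn w (Icc φ₀ φ₁) := fun t ht =>
          (hwcont t (hsubIoo (hIccsub ht))).continuousWithinAt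
        exact hwc.preimage_isClosed_of_isClosed isClosed_Icc isClosed_Iic
      have hSne : S.Nonempty := ⟨φ₀, ⟨le_refl φ₀, hφ₀φ₁.le⟩, hcon⟩
      have hSbdd : BddAbove S := ⟨φ₁, fun t ht => ht.1.2⟩
      set s := sSup S with hsdef
      have hsS : s ∈ S := hSclosed.csSup_mem hSne hSbdd
      have hsρ : s ∈ Ioo 0 ρ := hsubIoo (hIccsub hsS.1)
      have hsφ₁ : s < φ₁ := by
        rcases lt_or_eq_of_le hsS.1.2 with hlt | heq
        · exact hlt
        · exfalso; rw [heq] at hsS; linarith [hsS.2]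
      have hWs : W s < 0 := by
        have hws := hwpos s hsρ
        have hqs := hqneg s hsρ
        have hrs := abs_lt.mp (hrball s (hIccsub hsS.1))
        have hP : (w s)^2 - (h s - c) * w s + q s ≤ -((ε/2) * w s) := by
          apply quad_upper _ _ _ _ hqs hws hε2.le
          linarith [hsS.2, hrs.1]
        rw [hWdef]
        apply div_neg_of_neg_of_pos _ (mul_pos hws (sub_pos.mpr hsρ.2))
        calc ((w s)^2 - (h s - c) * w s + q s) ≤ -((ε/2) * w s) := hP
          _ < 0 := by nlinarith [mul_pos hε2 hws]
      obtain ⟨t, ht1, ht2⟩ := right_gt s φ₁ hsρ hsφ₁ hWs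
      have htS : t ∈ S := ⟨⟨hsS.1.1.trans ht1.1.le, ht1.2⟩, le_trans ht2.le hsS.2⟩
      have : t ≤ s := le_csSup hSbdd htS
      linarith [ht1.1]
    -- antitone H and contradiction
    set H : ℝ → ℝ := fun φ => w φ - (ε/2) * Real.log (ρ - φ) with hHdef
    have hHd : ∀ x ∈ Ioo φ₀ ρ, HasDerivAt H (W x - (ε/2) * ((ρ - x)⁻¹ * (-1))) x := by
      intro x hx
      have hxρ : x ∈ Ioo 0 ρ := ⟨lt_trans (lt_of_le_of_lt hα'0 hφ₀.1) hx.1, hx.2⟩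
      have hρx : 0 < ρ - x := sub_pos.mpr hx.2
      have hlog : HasDerivAt (fun φ => Real.log (ρ - φ)) ((ρ - x)⁻¹ * (-1)) x := by
        have := (Real.hasDerivAt_log (ne_of_gt hρx)).comp x ((hasDerivAt_id x).const_sub ρ)
        exact this
      exact (hDW x hxρ).sub (hlog.const_mul (ε/2))
    have hHanti : AntitoneOn H (Ico φ₀ ρ) := by
      apply antitoneOn_of_deriv_nonpos (convex_Ico _ _)
      · intro t ht
        have htρ : t ∈ Ioo 0 ρ := ⟨lt_of_le_of_lt hα'0 (lt_of_lt_of_le hφ₀.1 ht.1), ht.2⟩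
        have hρt : 0 < ρ - t := sub_pos.mpr ht.2
        have hlog : HasDerivAt (fun φ => Real.log (ρ - φ)) ((ρ - t)⁻¹ * (-1)) t := by
          have := (Real.hasDerivAt_log (ne_of_gt hρt)).comp t ((hasDerivAt_id t).const_sub ρ)
          exact this
        exact ((hDW t htρ).sub (hlog.const_mul (ε/2))).continuousAt.continuousWithinAt
      · intro x hx
        rw [interior_Ico] at hx
        exact (hHd x hx).differentiableAt.differentiableWithinAt
      · intro x hx
        rw [interior_Ico] at hx
        rw [(hHd x hx).deriv]
        have hxρ : x ∈ Ioo 0 ρ := ⟨lt_trans (lt_of_le_of_lt hα'0 hφ₀.1) hx.1, hx.2⟩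
        have hxα' : x ∈ Ioo α' ρ := ⟨lt_trans hφ₀.1 hx.1, hx.2⟩
        have hwx := hwpos x hxρ
        have hqx := hqneg x hxρ
        have hρx : 0 < ρ - x := sub_pos.mpr hx.2
        have hwle : w x ≤ L - ε := hpers x ⟨hx.1.le, hx.2⟩
        have hrx := abs_lt.mp (hrball x hxα')
        have hP : (w x)^2 - (h x - c) * w x + q x ≤ -((ε/2) * w x) := by
          apply quad_upper _ _ _ _ hqx hwx hε2.le
          linarith [hrx.1]
        have hWx : W x ≤ -(ε/2) * (ρ - x)⁻¹ := by
          rw [hWdef]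
          simp only
          rw [div_le_iff₀ (mul_pos hwx hρx)]
          have heq : -(ε/2) * (ρ - x)⁻¹ * (w x * (ρ - x)) = -((ε/2) * w x) := by
            field_simp
          rw [heq]
          exact hP
        have heq2 : W x - ε/2 * ((ρ - x)⁻¹ * (-1)) = W x + (ε/2) * (ρ - x)⁻¹ := by ring
        rw [heq2]
        have : -(ε/2) * (ρ - x)⁻¹ + (ε/2) * (ρ - x)⁻¹ = 0 := by ring
        linarith [hWx]
    -- pick φ₂ close to ρ
    set t0 : ℝ := min ((ρ - φ₀)/2) (Real.exp ((-2/ε) * (H φ₀ + 1))) with ht0def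
    have ht0pos : 0 < t0 := lt_min (by linarith [hφ₀.2]) (Real.exp_pos _)
    set φ₂ : ℝ := ρ - t0 with hφ₂def
    have ht0le : t0 ≤ (ρ - φ₀)/2 := min_le_left _ _
    have hφ₂mem : φ₂ ∈ Ico φ₀ ρ := by
      constructor
      · rw [hφ₂def]; linarith [hφ₀.2]
      · rw [hφ₂def]; linarith
    have hφ₂ρ : φ₂ ∈ Ioo 0 ρ :=
      ⟨by linarith [hφ₀.1, hα'0, hφ₂mem.1], hφ₂mem.2⟩
    have hH2 : H φ₂ ≤ H φ₀ := hHanti ⟨le_refl _, hφ₀.2⟩ hφ₂mem hφ₂mem.1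
    have hlogt : Real.log t0 ≤ (-2/ε) * (H φ₀ + 1) := by
      rw [Real.log_le_iff_le_exp ht0pos]
      exact min_le_right _ _
    have hwφ₂ : w φ₂ ≤ -1 := by
      have hρφ₂ : ρ - φ₂ = t0 := by rw [hφ₂def]; ring
      have hexp : w φ₂ = H φ₂ + (ε/2) * Real.log t0 := by
        rw [hHdef]; simp only [hρφ₂]; ring
      rw [hexp]
      have hmul : (ε/2) * Real.log t0 ≤ (ε/2) * ((-2/ε) * (H φ₀ + 1)) :=
        mul_le_mul_of_nonneg_left hlogt hε2.le
      have heq : (ε/2) * ((-2/ε) * (H φ₀ + 1)) = -(H φ₀ + 1) := by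
        field_simp
      have hmul2 : ε / 2 * Real.log t0 ≤ -(H φ₀ + 1) := by rw [← heq]; exact hmul
      clear_value φ₂
      clear_value t0
      clear_value H
      linarith [hH2, hmul2]
    linarith [hwpos φ₂ hφ₂ρ]
  -- conclusion
  filter_upwards [Ioo_mem_nhdsLT_of_mem (⟨hα'ρ, le_refl ρ⟩ : ρ ∈ Ioc α' ρ)] with φ hφ
  have h1 := mainU φ hφ
  have h2 := mainV φ hφ
  rw [Real.dist_eq, abs_lt]
  constructor <;> linarith
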